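/- For an arbitrary connection form ω, the map ωˢ defined by ωˢ(u)x := ω(u)x − η(Dωv(u), x)·v + η(v,x)·Σᵢ η(bᵢ,u)·Dωv(bᵢ) − η(v,u)·Σᵢ η(Dωbᵢ(v), x)·bᵢ is again a connection form (each ωˢ(u) is η-skew) and is semi-teleparallel with respect to {v, b₁, b₂, b₃}, i.e. dv(u) + ωˢ(u)v = 0 for all u ∈ V and dbᵢ(v) + ωˢ(v)bᵢ = 0 for i = 1,2,3. -/

import Mathlib

open Finset

/- Minkowski space V = ℝ⁴ with bilinear form η. -/
abbrev V4 := Fin 4 → ℝ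

def eta (x y : V4) : ℝ := -(x 0 * y 0) + x 1 * y 1 + x 2 * y 2 + x 3 * y 3

/-- `f : V → V` is linear. -/
def IsLin (f : V4 → V4) : Prop :=
  (∀ x y, f (x + y) = f x + f y) ∧ ∀ (c : ℝ) (x : V4), f (c • x) = c • f x

/-- `f` is η-skew: η(f x, y) = −η(x, f y). -/
def IsSkew (f : V4 → V4) : Prop := ∀ x y, eta (f x) y = - eta x (f y)

/-- A connection form: a linear map `ω : V → End V` with each `ω u` η-skew. -/
def ConnForm (ω : V4 → V4 → V4) : Prop :=
  (∀ u u', ω (u + u') = ω u + ω u') ∧ (∀ (c : ℝ) (u : V4), ω (c • u) = c • ω u) ∧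
  (∀ u, IsLin (ω u)) ∧ (∀ u, IsSkew (ω u))

/-- The semi-teleparallel connection constructed from a Lorentz connection `ω`:
`ωˢ(u)x = ω(u)x − η(Dωv(u),x)·v + η(v,x)·Σᵢ η(bᵢ,u)·Dωv(bᵢ) − η(v,u)·Σᵢ η(Dωbᵢ(v),x)·bᵢ`,
where `Dωv(u) = dv(u) + ω(u)v` and `Dωbᵢ(u) = dbᵢ(u) + ω(u)bᵢ`. -/
def omegaS (v : V4) (dv : V4 → V4) (b : Fin 3 → V4) (db : Fin 3 → V4 → V4)
    (ω : V4 → V4 → V4) (u x : V4) : V4 :=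
  ω u x - eta (dv u + ω u v) x • v
    + eta v x • ∑ i : Fin 3, eta (b i) u • (dv (b i) + ω (b i) v)
    - eta v u • ∑ i : Fin 3, eta (db i v + ω v (b i)) x • b i

lemma eta_symm (x y : V4) : eta x y = eta y x := by simp [eta]; ring
lemma eta_zero_left (y : V4) : eta 0 y = 0 := by simp [eta]
lemma eta_zero_right (y : V4) : eta y 0 = 0 := by simp [eta]
lemma eta_add_left (x y z : V4) : eta (x + y) z = eta x z + eta y z := by
  simp [eta, Pi.add_apply]; ring
lemma eta_add_right (x y z : V4) : eta x (y + z) = eta x y + eta x z := by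
  simp [eta, Pi.add_apply]; ring
lemma eta_smul_left (c : ℝ) (x y : V4) : eta (c • x) y = c * eta x y := by
  simp [eta, Pi.smul_apply, smul_eq_mul]; ring
lemma eta_smul_right (c : ℝ) (x y : V4) : eta x (c • y) = c * eta x y := by
  simp [eta, Pi.smul_apply, smul_eq_mul]; ring
lemma eta_sub_left (x y z : V4) : eta (x - y) z = eta x z - eta y z := by
  simp [eta, Pi.sub_apply]; ring
lemma eta_sub_right (x y z : V4) : eta x (y - z) = eta x y - eta x z := by
  simp [eta, Pi.sub_apply]; ring
lemma eta_sum_left {ι} (s : Finset ι) (f : ι → V4) (y : V4) :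
    eta (∑ i ∈ s, f i) y = ∑ i ∈ s, eta (f i) y := by
  classical
  induction s using Finset.induction_on with
  | empty => simp [eta_zero_left]
  | insert _ _ h ih => rw [Finset.sum_insert h, Finset.sum_insert h, eta_add_left, ih]
lemma eta_sum_right {ι} (s : Finset ι) (f : ι → V4) (y : V4) :
    eta y (∑ i ∈ s, f i) = ∑ i ∈ s, eta y (f i) := by
  rw [eta_symm, eta_sum_left]; exact Finset.sum_congr rfl fun i _ => eta_symm _ _

lemma eta_nondeg (x : V4) (h : ∀ y, eta y x = 0) : x = 0 := by
  funext j
  fin_cases j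
  · have := h (Pi.single 0 1); simp [eta, Pi.single_apply] at this; simpa using this
  · have := h (Pi.single 1 1); simpa [eta, Pi.single_apply] using this
  · have := h (Pi.single 2 1); simpa [eta, Pi.single_apply] using this
  · have := h (Pi.single 3 1); simpa [eta, Pi.single_apply] using this

lemma decomp (v : V4) (hv : eta v v = -1) (b : Fin 3 → V4)
    (hb : ∀ i j, eta (b i) (b j) = if i = j then 1 else 0)
    (hvb : ∀ i, eta v (b i) = 0) (z : V4) :
    z = -(eta v z) • v + ∑ i, eta (b i) z • b i := by
  classical
  set W : Fin 4 → V4 := ![v, b 0, b 1, b 2] with hW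
  have hli : LinearIndependent ℝ W := by
    rw [Fintype.linearIndependent_iff]
    intro g hg i
    have key : ∀ y : V4, ∑ j, g j * eta y (W j) = 0 := by
      intro y
      have := congrArg (eta y) hg
      rw [eta_sum_right, eta_zero_right] at this
      simpa [eta_smul_right] using this
    fin_cases i
    · have := key v
      simp [hW, Fin.sum_univ_four, hv, hvb] at this
      simpa using this
    · have := key (b 0)
      simp [hW, Fin.sum_univ_four, hb, eta_symm (b 0) v, hvb] at this
      simpa using this
    · have := key (b 1)
      simp [hW, Fin.sum_univ_four, hb, eta_symm (b 1) v, hvb] at this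
      simpa using this
    · have := key (b 2)
      simp [hW, Fin.sum_univ_four, hb, eta_symm (b 2) v, hvb] at this
      simpa using this
  have hcard : Fintype.card (Fin 4) = Module.finrank ℝ V4 := by simp
  have hsp := hli.span_eq_top_of_card_eq_finrank hcard
  set w : V4 := z + (eta v z) • v - ∑ i, eta (b i) z • b i with hwdef
  have hgen : ∀ i, eta (W i) w = 0 := by
    intro i
    have expand : ∀ y : V4, eta y w = eta y z + eta v z * eta y v - ∑ i, eta (b i) z * eta y (b i) := by
      intro y
      rw [hwdef, eta_sub_right, eta_add_right, eta_smul_right, eta_sum_right]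
      simp [eta_smul_right]
    fin_cases i <;> rw [expand] <;>
      simp [hW, hv, hvb, hb, Fin.sum_univ_three, eta_symm _ v]
  have hw : ∀ y : V4, eta y w = 0 := by
    intro y
    have hy : y ∈ Submodule.span ℝ (Set.range W) := by rw [hsp]; trivial
    induction hy using Submodule.span_induction with
    | mem x hx => obtain ⟨i, rfl⟩ := hx; exact hgen i
    | zero => exact eta_zero_left w
    | add x y _ _ hx hy => rw [eta_add_left, hx, hy, add_zero]
    | smul c x _ hx => rw [eta_smul_left, hx, mul_zero]
  have hw0 : w = 0 := eta_nondeg w hw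
  have : z = w - (eta v z) • v + ∑ i, eta (b i) z • b i := by
    rw [hwdef]; abel
  rw [hw0] at this
  simpa using this


/-- For an arbitrary connection form `ω`, the map `ωˢ` is again a
connection form (in particular each `ωˢ(u)` is η-skew) and is semi-teleparallel with
respect to `{v, b₁, b₂, b₃}`: `dv(u) + ωˢ(u)v = 0` for all `u` and
`dbᵢ(v) + ωˢ(v)bᵢ = 0` for `i = 1,2,3`. -/
theorem statement4 (v : V4) (hv : eta v v = -1)
    (dv : V4 → V4) (hdvlin : IsLin dv) (hdvorth : ∀ u, eta v (dv u) = 0)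
    (b : Fin 3 → V4) (hb : ∀ i j, eta (b i) (b j) = if i = j then 1 else 0)
    (hvb : ∀ i, eta v (b i) = 0)
    (db : Fin 3 → V4 → V4) (hdblin : ∀ i, IsLin (db i))
    (hcompat1 : ∀ i u, eta v (db i u) + eta (b i) (dv u) = 0)
    (hcompat2 : ∀ i j u, eta (b i) (db j u) + eta (b j) (db i u) = 0)
    (ω : V4 → V4 → V4) (hω : ConnForm ω) :
    ConnForm (omegaS v dv b db ω) ∧
    (∀ u, dv u + omegaS v dv b db ω u v = 0) ∧
    (∀ i, db i v + omegaS v dv b db ω v (b i) = 0) := by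
  obtain ⟨hA, hS, hL, hK⟩ := hω
  have hAapp : ∀ w w' z, ω (w + w') z = ω w z + ω w' z := fun w w' z => by rw [hA]; rfl
  have hSapp : ∀ (c : ℝ) w z, ω (c • w) z = c • ω w z := fun c w z => by rw [hS]; rfl
  have hsk : ∀ w a c, eta (ω w a) c = - eta a (ω w c) := hK
  have hvωv : ∀ w, eta v (ω w v) = 0 := fun w => by
    have h1 := hsk w v v
    have h2 := eta_symm (ω w v) v
    linarith
  have hvDv : ∀ w, eta v (dv w + ω w v) = 0 := fun w => by
    rw [eta_add_right, hdvorth, hvωv]; ring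
  have hF2 : ∀ i w, eta v (db i w + ω w (b i)) = -(eta (b i) (dv w + ω w v)) := by
    intro i w
    have h1 := hcompat1 i w
    have h2 := hsk w v (b i)
    have h3 := eta_symm (b i) (ω w v)
    rw [eta_add_right, eta_add_right]
    linarith
  have hF3 : ∀ i j, eta (b i) (db j v + ω v (b j)) = -(eta (b j) (db i v + ω v (b i))) := by
    intro i j
    have h1 := hcompat2 i j v
    have h2 := hsk v (b i) (b j)
    have h3 := eta_symm (b j) (ω v (b i))
    rw [eta_add_right, eta_add_right]
    linarith
  have hDvv : dv v + ω v v = ∑ j, eta (b j) (dv v + ω v v) • b j := by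
    have h := decomp v hv b hb hvb (dv v + ω v v)
    rw [hvDv v] at h
    simpa using h
  have hDb : ∀ i, db i v + ω v (b i)
      = eta (b i) (dv v + ω v v) • v + ∑ j, eta (b j) (db i v + ω v (b i)) • b j := by
    intro i
    have h := decomp v hv b hb hvb (db i v + ω v (b i))
    rw [hF2 i v] at h
    simpa using h
  have hF6 : ∀ w, dv w + ω w v
      = -(eta v w) • (dv v + ω v v) + ∑ i, eta (b i) w • (dv (b i) + ω (b i) v) := by
    intro w
    conv_lhs => rw [decomp v hv b hb hvb w]
    simp only [Fin.sum_univ_three, hdvlin.1, hdvlin.2, hAapp, hSapp, Pi.add_apply, Pi.smul_apply]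
    module
  refine ⟨⟨?_, ?_, ?_, ?_⟩, ?_, ?_⟩
  · -- additivity in u
    intro u u'
    funext x
    simp only [omegaS, Pi.add_apply, hAapp, hdvlin.1, eta_add_left, eta_add_right,
      Fin.sum_univ_three]
    module
  · -- smul in u
    intro c u
    funext x
    simp only [omegaS, Pi.smul_apply, hSapp, hdvlin.2, eta_smul_left, eta_smul_right,
      eta_add_left, eta_add_right, Fin.sum_univ_three]
    module
  · -- linearity in x
    intro u
    constructor
    · intro x y
      simp only [omegaS, (hL u).1, eta_add_right, eta_add_left, Fin.sum_univ_three]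
      module
    · intro c x
      simp only [omegaS, (hL u).2, eta_smul_right, eta_smul_left, Fin.sum_univ_three]
      module
  · -- skewness
    intro u x y
    have hG : eta (ω u x) y = -eta (ω u y) x := by
      have h1 := hsk u x y
      have h2 := eta_symm x (ω u y)
      linarith
    have hsymx : ∀ w, eta x w = eta w x := fun w => eta_symm x w
    have hsymy : ∀ w, eta y w = eta w y := fun w => eta_symm y w
    have h2gen : ∀ z : V4, eta (dv u) z
        = -(eta v u) * (eta (dv v) z + eta (ω v v) z)
          + (eta (b 0) u * (eta (dv (b 0)) z + eta (ω (b 0) v) z)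
            + eta (b 1) u * (eta (dv (b 1)) z + eta (ω (b 1) v) z)
            + eta (b 2) u * (eta (dv (b 2)) z + eta (ω (b 2) v) z))
          - eta (ω u v) z := by
      intro z
      have h := congrArg (fun t => eta t z) (hF6 u)
      simp only [eta_add_left, eta_smul_left, eta_sum_left, Fin.sum_univ_three] at h
      linear_combination h
    have h4gen : ∀ z : V4, eta (dv v) z
        = (eta (b 0) (dv v) + eta (b 0) (ω v v)) * eta (b 0) z
          + (eta (b 1) (dv v) + eta (b 1) (ω v v)) * eta (b 1) z
          + (eta (b 2) (dv v) + eta (b 2) (ω v v)) * eta (b 2) z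
          - eta (ω v v) z := by
      intro z
      have h := congrArg (fun t => eta t z) hDvv
      simp only [eta_add_left, eta_smul_left, eta_sum_left, eta_add_right,
        Fin.sum_univ_three] at h
      linear_combination h
    have h5gen : ∀ i (z : V4), eta (db i v) z
        = (eta (b i) (dv v) + eta (b i) (ω v v)) * eta v z
          + ((eta (b 0) (db i v) + eta (b 0) (ω v (b i))) * eta (b 0) z
            + (eta (b 1) (db i v) + eta (b 1) (ω v (b i))) * eta (b 1) z
            + (eta (b 2) (db i v) + eta (b 2) (ω v (b i))) * eta (b 2) z)
          - eta (ω v (b i)) z := by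
      intro i z
      have h := congrArg (fun t => eta t z) (hDb i)
      simp only [eta_add_left, eta_smul_left, eta_sum_left, eta_add_right,
        Fin.sum_univ_three] at h
      linear_combination h
    have hωbsym : ∀ i j, eta (b i) (ω v (b j)) = -(eta (b j) (ω v (b i))) := by
      intro i j
      have h1 := hsk v (b j) (b i)
      have h2 := eta_symm (b i) (ω v (b j))
      linarith
    have hdbsym : ∀ i j, eta (b i) (db j v) = -(eta (b j) (db i v)) := by
      intro i j
      have := hcompat2 j i v
      linarith
    simp only [omegaS, eta_sub_left, eta_add_left, eta_smul_left, eta_sum_left,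
      eta_sub_right, eta_add_right, eta_smul_right, eta_sum_right, Fin.sum_univ_three]
    simp only [hsymx, hsymy]
    rw [hG]
    simp only [h2gen, h4gen, h5gen]
    have hdbdiag : ∀ i, eta (b i) (db i v) = 0 := fun i => by
      have := hcompat2 i i v; linarith
    have hωbdiag : ∀ i, eta (b i) (ω v (b i)) = 0 := fun i => by
      have := hωbsym i i; linarith
    rw [hdbsym 1 0, hdbsym 2 0, hdbsym 2 1, hωbsym 1 0, hωbsym 2 0, hωbsym 2 1]
    simp only [hdbdiag, hωbdiag]
    ring
  · -- Dωs v = 0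
    intro u
    have hTv : ∀ i, eta (db i v + ω v (b i)) v = -(eta (b i) (dv v + ω v v)) := by
      intro i
      rw [eta_symm]
      exact hF2 i v
    have h0 : eta (dv u + ω u v) v = 0 := by rw [eta_symm]; exact hvDv u
    simp only [omegaS, h0, hv, hTv, zero_smul, sub_zero]
    have h6 := hF6 u
    have hvv := hDvv
    simp only [Fin.sum_univ_three] at h6 hvv ⊢
    linear_combination (norm := module) h6 - (eta v u) • hvv
  · -- Dωs b i at v = 0
    intro i
    have hα : eta (dv v + ω v v) (b i) = eta (b i) (dv v + ω v v) := eta_symm _ _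
    have hT : ∀ j, eta (db j v + ω v (b j)) (b i) = -(eta (b j) (db i v + ω v (b i))) := by
      intro j
      rw [eta_symm]
      exact hF3 i j
    simp only [omegaS, hα, hv, hvb, hT, zero_smul, add_zero]
    have hd := hDb i
    simp only [Fin.sum_univ_three] at hd ⊢
    linear_combination (norm := module) hd
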